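/- Let S be a finite state space and K a transition kernel with K(x,y) > 0 for all x, y, and let π be a stationary probability distribution for K. Then for every probability distribution μ₀ on S, the distributions μ_t defined by μ_{t+1}(y) = ∑_x μ_t(x)K(x,y) converge to π as t → ∞ (i.e., for each state y, μ_t(y) → π(y)). -/
import Mathlib


theorem mh_convergence {S : Type*} [Fintype S]
    (K : S → S → ℝ) (hK : ∀ x y, 0 < K x y) (hK1 : ∀ x, ∑ y, K x y = 1)
    (π : S → ℝ) (hπ0 : ∀ x, 0 ≤ π x) (hπ1 : ∑ x, π x = 1)
    (hstat : ∀ y, ∑ x, π x * K x y = π y)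
    (μ : ℕ → S → ℝ) (hμ0 : ∀ x, 0 ≤ μ 0 x) (hμ1 : ∑ x, μ 0 x = 1)
    (hstep : ∀ t y, μ (t + 1) y = ∑ x, μ t x * K x y) :
    ∀ y, Filter.Tendsto (fun t => μ t y) Filter.atTop (nhds (π y)) := by
  intro y₀
  have hS : Nonempty S := ⟨y₀⟩
  -- minimal entry of the kernel
  set ε : ℝ := Finset.univ.inf' (Finset.univ_nonempty (α := S × S))
    (fun p : S × S => K p.1 p.2) with hεdef
  have hεpos : 0 < ε := by
    rw [hεdef]
    rw [Finset.lt_inf'_iff]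
    intro b _; exact hK b.1 b.2
  have hεle : ∀ x y, ε ≤ K x y := fun x y =>
    Finset.inf'_le _ (Finset.mem_univ (x, y))
  set n : ℕ := Fintype.card S with hn
  have hnε : (n : ℝ) * ε ≤ 1 := by
    obtain ⟨x⟩ := hS
    calc (n : ℝ) * ε = ∑ _y : S, ε := by
          rw [Finset.sum_const, Finset.card_univ, nsmul_eq_mul]
      _ ≤ ∑ y, K x y := Finset.sum_le_sum fun y _ => hεle x y
      _ = 1 := hK1 x
  set r : ℝ := 1 - (n : ℝ) * ε with hr
  have hr0 : 0 ≤ r := by simp [hr, hnε]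
  have hr1 : r < 1 := by
    have hnpos : 0 < (n : ℝ) := by
      simp [hn, Nat.cast_pos, Fintype.card_pos]
    nlinarith
  -- total mass is preserved
  have hsum : ∀ t, ∑ x, μ t x = 1 := by
    intro t
    induction t with
    | zero => exact hμ1
    | succ t ih =>
      calc ∑ y, μ (t + 1) y = ∑ y, ∑ x, μ t x * K x y := by
            simp only [hstep]
        _ = ∑ x, ∑ y, μ t x * K x y := Finset.sum_comm
        _ = ∑ x, μ t x * ∑ y, K x y := by
            simp [Finset.mul_sum]
        _ = 1 := by simp [hK1, ih]
  set d : ℕ → ℝ := fun t => ∑ x, |μ t x - π x| with hd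
  -- contraction step
  have hcontr : ∀ t, d (t + 1) ≤ r * d t := by
    intro t
    have hdiff : ∀ y, μ (t + 1) y - π y = ∑ x, (μ t x - π x) * (K x y - ε) := by
      intro y
      have h0 : ∑ x, (μ t x - π x) = 0 := by
        rw [Finset.sum_sub_distrib, hsum t, hπ1, sub_self]
      have : ∑ x, (μ t x - π x) * (K x y - ε)
          = ∑ x, (μ t x - π x) * K x y - (∑ x, (μ t x - π x)) * ε := by
        rw [Finset.sum_mul]
        rw [← Finset.sum_sub_distrib]
        congr 1; ext x; ring
      rw [this, h0, zero_mul, sub_zero, hstep, ← hstat y,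
        ← Finset.sum_sub_distrib]
      congr 1; ext x; ring
    calc d (t + 1) = ∑ y, |∑ x, (μ t x - π x) * (K x y - ε)| := by
          simp only [hd, hdiff]
      _ ≤ ∑ y, ∑ x, |μ t x - π x| * (K x y - ε) := by
          apply Finset.sum_le_sum
          intro y _
          calc |∑ x, (μ t x - π x) * (K x y - ε)|
              ≤ ∑ x, |(μ t x - π x) * (K x y - ε)| :=
                Finset.abs_sum_le_sum_abs _ _
            _ = ∑ x, |μ t x - π x| * (K x y - ε) := by
                apply Finset.sum_congr rfl
                intro x _
                rw [abs_mul, abs_of_nonneg (sub_nonneg.mpr (hεle x y))]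
      _ = ∑ x, |μ t x - π x| * (∑ y, (K x y - ε)) := by
          rw [Finset.sum_comm]
          exact Finset.sum_congr rfl fun x _ => (Finset.mul_sum _ _ _).symm
      _ = r * d t := by
          have : ∀ x : S, ∑ y, (K x y - ε) = r := by
            intro x
            rw [Finset.sum_sub_distrib, hK1, Finset.sum_const,
              Finset.card_univ, nsmul_eq_mul, hr, hn]
          simp only [this, hd]
          rw [← Finset.sum_mul, mul_comm]
  have hgeo : ∀ t, d t ≤ r ^ t * d 0 := by
    intro t
    induction t with
    | zero => simp
    | succ t ih =>
      calc d (t + 1) ≤ r * d t := hcontr t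
        _ ≤ r * (r ^ t * d 0) := by
            apply mul_le_mul_of_nonneg_left ih hr0
        _ = r ^ (t + 1) * d 0 := by ring
  have habs : ∀ t, |μ t y₀ - π y₀| ≤ r ^ t * d 0 := by
    intro t
    refine le_trans ?_ (hgeo t)
    exact Finset.single_le_sum (f := fun x => |μ t x - π x|)
      (fun x _ => abs_nonneg _) (Finset.mem_univ y₀)
  have htend : Filter.Tendsto (fun t => r ^ t * d 0) Filter.atTop (nhds 0) := by
    have := (tendsto_pow_atTop_nhds_zero_of_lt_one hr0 hr1).mul_const (d 0)
    simpa using this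
  have h0 : Filter.Tendsto (fun t => |μ t y₀ - π y₀|) Filter.atTop (nhds 0) :=
    squeeze_zero (fun t => abs_nonneg _) habs htend
  have h1 : Filter.Tendsto (fun t => μ t y₀ - π y₀) Filter.atTop (nhds 0) :=
    (tendsto_zero_iff_abs_tendsto_zero _).mpr h0
  have := h1.add_const (π y₀)
  simpa using this
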